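/- If A and B are self-adjoint matrices on ℂⁿ with A ≥ B ≥ 0, and x ∈ ℂⁿ and λ ∈ ℝ satisfy (√A − √B)x = λx with x ≠ 0 and λ < 0, then ⟨√A x, x⟩ = 0, from which √A x = √B x = 0 and a contradiction follows; in particular every real eigenvalue λ of √A − √B satisfies λ ⟨√A x, x⟩ ≥ 0 for a corresponding eigenvector x. -/

import Mathlib

open ComplexOrder

/-- The positive semidefinite square root of a positive semidefinite matrix
(the definition `Matrix.PosSemidef.sqrt` of the older Mathlib, since removed). -/
noncomputable def Matrix.PosSemidef.sqrt {n : Type*} [Fintype n] [DecidableEq n] {𝕜 : Type*}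
    [RCLike 𝕜] {A : Matrix n n 𝕜} (hA : A.PosSemidef) : Matrix n n 𝕜 :=
  hA.1.eigenvectorUnitary.1 * Matrix.diagonal ((↑) ∘ (√·) ∘ hA.1.eigenvalues) *
    (star hA.1.eigenvectorUnitary : Matrix n n 𝕜)

theorem Matrix.PosSemidef.posSemidef_sqrt {n : Type*} [Fintype n] [DecidableEq n] {𝕜 : Type*}
    [RCLike 𝕜] {A : Matrix n n 𝕜} (hA : A.PosSemidef) : hA.sqrt.PosSemidef := by
  unfold Matrix.PosSemidef.sqrt
  rw [star_eq_conjTranspose]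
  apply Matrix.PosSemidef.mul_mul_conjTranspose_same
  apply Matrix.PosSemidef.diagonal
  intro i
  simp only [Pi.zero_apply, Function.comp_apply]
  exact_mod_cast Real.sqrt_nonneg _

theorem Matrix.PosSemidef.sqrt_mul_self {n : Type*} [Fintype n] [DecidableEq n] {𝕜 : Type*}
    [RCLike 𝕜] {A : Matrix n n 𝕜} (hA : A.PosSemidef) : hA.sqrt * hA.sqrt = A := by
  unfold Matrix.PosSemidef.sqrt
  conv_rhs => rw [hA.1.spectral_theorem, Unitary.conjStarAlgAut_apply]
  have hU : (star hA.1.eigenvectorUnitary : Matrix n n 𝕜) * hA.1.eigenvectorUnitary.1 = 1 :=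
    Unitary.coe_star_mul_self _
  have hD : Matrix.diagonal ((↑) ∘ (√·) ∘ hA.1.eigenvalues) *
      Matrix.diagonal ((↑) ∘ (√·) ∘ hA.1.eigenvalues) =
      Matrix.diagonal (((↑) : ℝ → 𝕜) ∘ hA.1.eigenvalues) := by
    rw [Matrix.diagonal_mul_diagonal]
    congr 1
    funext i
    simp only [Function.comp_apply]
    rw [← RCLike.ofReal_mul, Real.mul_self_sqrt (hA.eigenvalues_nonneg i)]
  calc _ = hA.1.eigenvectorUnitary.1 * Matrix.diagonal ((↑) ∘ (√·) ∘ hA.1.eigenvalues) *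
        ((star hA.1.eigenvectorUnitary : Matrix n n 𝕜) * hA.1.eigenvectorUnitary.1) *
        Matrix.diagonal ((↑) ∘ (√·) ∘ hA.1.eigenvalues) *
        (star hA.1.eigenvectorUnitary : Matrix n n 𝕜) := by simp only [Matrix.mul_assoc]
    _ = _ := by rw [hU, Matrix.mul_one, Matrix.mul_assoc _ (Matrix.diagonal _) (Matrix.diagonal _), hD]

/-- If `A ≥ B ≥ 0` (Loewner order), `x ≠ 0` and `(√A - √B) x = λ x` with `λ < 0`,
then `⟨√A x, x⟩ = 0`, from which `√A x = √B x = 0` and a contradiction follows; in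
particular every real eigenvalue `λ` of `√A - √B` satisfies `λ ⟨√A x, x⟩ ≥ 0` for a
corresponding eigenvector `x`. -/
theorem sqrt_sub_sqrt_eigenvalue_nonneg {n : ℕ} (A B : Matrix (Fin n) (Fin n) ℂ)
    (hA : A.PosSemidef) (hB : B.PosSemidef) (hAB : (A - B).PosSemidef)
    (x : Fin n → ℂ) (hx : x ≠ 0) (lam : ℝ)
    (heig : (hA.sqrt - hB.sqrt).mulVec x = (lam : ℂ) • x) :
    (lam < 0 →
      dotProduct (star x) (hA.sqrt.mulVec x) = 0 ∧
      hA.sqrt.mulVec x = 0 ∧ hB.sqrt.mulVec x = 0 ∧ False) ∧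
    0 ≤ lam * (dotProduct (star x) (hA.sqrt.mulVec x)).re := by
  set D := hA.sqrt - hB.sqrt with hD
  set a := dotProduct (star x) (hA.sqrt.mulVec x) with ha
  set b := dotProduct (star x) (hB.sqrt.mulVec x) with hb
  have ha0 : 0 ≤ a := hA.posSemidef_sqrt.dotProduct_mulVec_nonneg x
  have hb0 : 0 ≤ b := hB.posSemidef_sqrt.dotProduct_mulVec_nonneg x
  -- A - B = √A * D + D * √B
  have hfact : A - B = hA.sqrt * D + D * hB.sqrt := by
    rw [hD]
    have h : hA.sqrt * (hA.sqrt - hB.sqrt) + (hA.sqrt - hB.sqrt) * hB.sqrt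
        = hA.sqrt * hA.sqrt - hB.sqrt * hB.sqrt := by noncomm_ring
    rw [h, hA.sqrt_mul_self, hB.sqrt_mul_self]
  have hDherm : D.IsHermitian := hA.posSemidef_sqrt.1.sub hB.posSemidef_sqrt.1
  -- key: x*(A-B)x = λ(a+b)
  have hkey : dotProduct (star x) ((A - B).mulVec x) = (lam : ℂ) * (a + b) := by
    rw [hfact, Matrix.add_mulVec, dotProduct_add]
    have h1 : (hA.sqrt * D).mulVec x = (lam : ℂ) • hA.sqrt.mulVec x := by
      rw [← Matrix.mulVec_mulVec, heig, Matrix.mulVec_smul]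
    have h2 : dotProduct (star x) ((D * hB.sqrt).mulVec x)
        = (lam : ℂ) * b := by
      rw [← Matrix.mulVec_mulVec, Matrix.dotProduct_mulVec, ← hDherm,
        ← Matrix.star_mulVec, heig]
      simp [hb, Matrix.dotProduct_mulVec, smul_dotProduct, Matrix.smul_vecMul, mul_comm]
    rw [h1, h2, dotProduct_smul, smul_eq_mul]
    ring
  have hABx : 0 ≤ (lam : ℂ) * (a + b) := hkey ▸ hAB.dotProduct_mulVec_nonneg x
  have hmain : lam < 0 →
      a = 0 ∧ hA.sqrt.mulVec x = 0 ∧ hB.sqrt.mulVec x = 0 ∧ False := by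
    intro hlam
    have hlamC : (lam : ℂ) < 0 := by exact_mod_cast hlam
    have hsum0 : a + b = 0 := by
      have h1 : (lam : ℂ) * (a + b) ≤ 0 :=
        mul_nonpos_of_nonpos_of_nonneg hlamC.le (add_nonneg ha0 hb0)
      have h2 : (lam : ℂ) * (a + b) = 0 := le_antisymm h1 hABx
      rcases mul_eq_zero.mp h2 with h | h
      · exact absurd h hlamC.ne
      · exact h
    have haz : a = 0 :=
      le_antisymm (le_of_le_of_eq (le_add_of_nonneg_right hb0) hsum0) ha0
    have hbz : b = 0 :=
      le_antisymm (le_of_le_of_eq (le_add_of_nonneg_left ha0) hsum0) hb0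
    have hAx : hA.sqrt.mulVec x = 0 :=
      (hA.posSemidef_sqrt.dotProduct_mulVec_zero_iff x).mp haz
    have hBx : hB.sqrt.mulVec x = 0 :=
      (hB.posSemidef_sqrt.dotProduct_mulVec_zero_iff x).mp hbz
    have hDx : D.mulVec x = 0 := by
      rw [hD, Matrix.sub_mulVec, hAx, hBx, sub_zero]
    have hxz : x = 0 := by
      have : (lam : ℂ) • x = 0 := by rw [← heig, hDx]
      exact (smul_eq_zero.mp this).resolve_left (by exact_mod_cast hlam.ne) 
    exact absurd hxz hx
  refine ⟨hmain, ?_⟩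
  rcases lt_or_ge lam 0 with hlam | hlam
  · exact ((hmain hlam).2.2.2).elim
  · exact mul_nonneg hlam (by simpa using (Complex.le_def.mp ha0).1)
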